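/- arXiv:cs/0203022 — 2 statements merged into one kernel-verified Lean document; each statement's English description precedes it below -/
import Mathlib

section
/- Let S be a sharing abstraction over X, L ⊆ X, and t a term with var(t) ⊆ X. If E ∈ γ_Sh(S) ∩ γ_Lin(L) and θ ∈ imgu(E), then χ(θ(t)) ≤ χ(t, S, L). -/
open scoped Classical

namespace SharingPaper

/-- Finite first-order terms over an arity-indexed alphabet `F`, with
variables drawn from the countably infinite set `ℕ` (playing the role of `U`). -/
inductive Term (F : ℕ → Type) : Type
  | var : ℕ → Term F
  | app : (n : ℕ) → F n → (Fin n → Term F) → Term F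

namespace Term

variable {F : ℕ → Type}

/-- The set `var(t)` of variables occurring in a term. -/
def vars : Term F → Set ℕ
  | var x => {x}
  | app n _ ts => ⋃ i : Fin n, vars (ts i)

/-- Number of occurrences of the variable `x` in a term. -/
def count (x : ℕ) : Term F → ℕ
  | var y => if y = x then 1 else 0
  | app n _ ts => ∑ i : Fin n, count x (ts i)

/-- `χ(x, t) = min(2, number of occurrences of x in t)`. -/
def chiVar (x : ℕ) (t : Term F) : ℕ := min 2 (t.count x)

/-- `χ(t) = max {χ(x, t) | x ∈ U}`. -/
noncomputable def mult (t : Term F) : ℕ := sSup (Set.range fun x => chiVar x t)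

end Term

variable {F : ℕ → Type}

/-- Substitutions, represented as maps from variables to terms. -/
abbrev Subst (F : ℕ → Type) := ℕ → Term F

namespace Subst

/-- Homomorphic extension of a substitution to terms. -/
def apply (θ : Subst F) : Term F → Term F
  | .var x => θ x
  | .app n f ts => .app n f fun i => apply θ (ts i)

/-- `dom(θ) = {u | θ(u) ≠ u}`. -/
def dom (θ : Subst F) : Set ℕ := {x | θ x ≠ .var x}

/-- `rng(θ) = ∪ {var(θ(u)) | u ∈ dom(θ)}`. -/
def rng (θ : Subst F) : Set ℕ := ⋃ x ∈ dom θ, (θ x).vars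

/-- A genuine substitution has a finite domain. -/
def IsSubst (θ : Subst F) : Prop := (dom θ).Finite

/-- Composition: `(θ ∘ ψ)(u) = θ(ψ(u))`. -/
def comp (θ ψ : Subst F) : Subst F := fun x => θ.apply (ψ x)

/-- `θ` is idempotent iff `dom(θ) ∩ rng(θ) = ∅`. -/
def Idempotent (θ : Subst F) : Prop := dom θ ∩ rng θ = ∅

/-- `θ ≤ ψ` iff `ψ = δ ∘ θ` for some substitution `δ`. -/
def Le (θ ψ : Subst F) : Prop := ∃ δ : Subst F, IsSubst δ ∧ ψ = comp δ θ

/-- `occ(θ, y) = {u ∈ U | y ∈ var(θ(u))}`. -/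
def occ (θ : Subst F) (y : ℕ) : Set ℕ := {u | y ∈ (θ u).vars}

/-- `α_Sh(θ) = {occ(θ, u) ∩ X | u ∈ U}`. -/
def alphaSh (X : Set ℕ) (θ : Subst F) : Set (Set ℕ) :=
  Set.range fun u => occ θ u ∩ X

/-- An assignment `M ⊆ U` models `θ` iff for every `x ↦ t ∈ θ`, `x ∈ M ↔ var(t) ⊆ M`. -/
def Models (M : Set ℕ) (θ : Subst F) : Prop :=
  ∀ x ∈ dom θ, (x ∈ M ↔ (θ x).vars ⊆ M)

/-- `θ` satisfies a Pos abstraction `f` over `X` iff `M ∩ X ∈ f` for every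
assignment `M` that models `θ`. -/
def Satisfies (X : Set ℕ) (θ : Subst F) (f : Set (Set ℕ)) : Prop :=
  ∀ M : Set ℕ, Models M θ → M ∩ X ∈ f

end Subst

/-- The set of unifiers of a set of equations. -/
def unif (E : Set (Term F × Term F)) : Set (Subst F) :=
  {θ | Subst.IsSubst θ ∧ ∀ p ∈ E, θ.apply p.1 = θ.apply p.2}

/-- Most general unifiers. -/
def mgu (E : Set (Term F × Term F)) : Set (Subst F) :=
  {θ ∈ unif E | ∀ ψ ∈ unif E, Subst.Le θ ψ}

/-- Idempotent most general unifiers. -/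
def imgu (E : Set (Term F × Term F)) : Set (Subst F) :=
  {θ ∈ mgu E | Subst.Idempotent θ}

/-- `γ_Sh(S)`. -/
def gammaSh (X : Set ℕ) (S : Set (Set ℕ)) : Set (Set (Term F × Term F)) :=
  {E | E.Finite ∧ ∃ θ ∈ imgu E, Subst.alphaSh X θ ⊆ S}

/-- `γ_Fr(F)`. -/
def gammaFr (Fv : Set ℕ) : Set (Set (Term F × Term F)) :=
  {E | E.Finite ∧ ∃ θ ∈ imgu E, ∀ x ∈ Fv, ∃ y, θ x = Term.var y}

/-- `γ_Lin(L)`. -/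
def gammaLin (L : Set ℕ) : Set (Set (Term F × Term F)) :=
  {E | E.Finite ∧ ∃ θ ∈ imgu E, ∀ x ∈ L, (θ x).mult ≤ 1}

/-- `γ_Pos(f)`. -/
def gammaPos (X : Set ℕ) (f : Set (Set ℕ)) : Set (Set (Term F × Term F)) :=
  {E | E.Finite ∧ ∃ θ ∈ imgu E, Subst.Satisfies X θ f}

/-- `γ_SFL(S, F, L)`. -/
def gammaSFL (X : Set ℕ) (S : Set (Set ℕ)) (Fv L : Set ℕ) :
    Set (Set (Term F × Term F)) :=
  gammaSh X S ∩ gammaFr Fv ∩ gammaLin L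

/-- `var(S) = ∪ {G | G ∈ S}`. -/
def varS {α : Type*} (S : Set (Set α)) : Set α := ⋃ G ∈ S, G

/-- `rel(t, S) = {G ∈ S | var(t) ∩ G ≠ ∅}`. -/
def rel (t : Term F) (S : Set (Set ℕ)) : Set (Set ℕ) :=
  {G ∈ S | t.vars ∩ G ≠ ∅}

/-- Closure `S*`: the least superset of `S` closed under binary unions. -/
def closure {α : Type*} (S : Set (Set α)) : Set (Set α) :=
  ⋂₀ {S' | S ⊆ S' ∧ ∀ G1 ∈ S', ∀ G2 ∈ S', G1 ∪ G2 ∈ S'}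

/-- Pairwise union `S1 ⊎ S2`. -/
def pairUnion {α : Type*} (S1 S2 : Set (Set α)) : Set (Set α) :=
  {G | ∃ G1 ∈ S1, ∃ G2 ∈ S2, G = G1 ∪ G2}

/-- `S^{*F}`: the least superset `S'` of `S` such that `G1 ∪ G2 ∈ S'` whenever
`G1, G2 ∈ S'` and `G1 ∩ G2 ∩ F = ∅`. -/
def closureF {α : Type*} (Fv : Set α) (S : Set (Set α)) : Set (Set α) :=
  ⋂₀ {S' | S ⊆ S' ∧ ∀ G1 ∈ S', ∀ G2 ∈ S', G1 ∩ G2 ∩ Fv = ∅ → G1 ∪ G2 ∈ S'}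

/-- `S1 ⊎_F S2`. -/
def pairUnionF {α : Type*} (Fv : Set α) (S1 S2 : Set (Set α)) : Set (Set α) :=
  {G | ∃ G1 ∈ S1, ∃ G2 ∈ S2, (G1 ≠ G2 → G1 ∩ G2 ∩ Fv = ∅) ∧ G = G1 ∪ G2}

/-- The Filé decomposition `K_F(S)`. -/
def KF {α : Type*} (Fv : Set α) (S : Set (Set α)) : Set (Set (Set α)) :=
  {B | B ⊆ S ∧ Fv ⊆ varS B ∧
    ∀ G1 ∈ B, ∀ G2 ∈ B, G1 ≠ G2 → G1 ∩ G2 ∩ Fv = ∅}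

/-- Abstract multiplicity `χ(t, S, L)`. -/
noncomputable def chiA (t : Term F) (S : Set (Set ℕ)) (L : Set ℕ) : ℕ :=
  if (∃ x ∈ varS S, Term.chiVar x t = 2) ∨
     (∃ x ∈ varS S, x ∈ t.vars \ L) ∨
     (∃ G ∈ S, ∃ x ∈ t.vars, ∃ y ∈ t.vars, x ≠ y ∧ x ∈ G ∧ y ∈ G)
  then 2 else 1

/-- The term `t` is a variable belonging to the freeness set `Fv` ("t ∈ F"). -/
def IsFreeTerm (t : Term F) (Fv : Set ℕ) : Prop := ∃ x ∈ Fv, t = Term.var x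

/-- The term `t` is a variable ("t ∈ U"). -/
def IsVarTerm (t : Term F) : Prop := ∃ x, t = Term.var x


section Aux

variable {F : ℕ → Type}

lemma count_pos_iff (x : ℕ) : ∀ t : Term F, 0 < t.count x ↔ x ∈ t.vars
  | .var y => by
      simp only [Term.count, Term.vars, Set.mem_singleton_iff]
      split
      · simp_all
      · simp_all [eq_comm]
  | .app n f ts => by
      simp only [Term.count, Term.vars, Set.mem_iUnion, Nat.pos_iff_ne_zero, ne_eq,
        Finset.sum_eq_zero_iff, Finset.mem_univ, true_implies, not_forall]
      exact exists_congr fun i => by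
        rw [← Ne, ← Nat.pos_iff_ne_zero, count_pos_iff x (ts i)]

lemma vars_apply (θ : Subst F) : ∀ t : Term F,
    (θ.apply t).vars = ⋃ x ∈ t.vars, (θ x).vars
  | .var y => by simp [Subst.apply, Term.vars]
  | .app n f ts => by
      simp only [Subst.apply, Term.vars]
      ext z
      simp only [Set.mem_iUnion]
      constructor
      · rintro ⟨i, hz⟩
        rw [vars_apply θ (ts i)] at hz
        simp only [Set.mem_iUnion] at hz
        obtain ⟨x, hx, hz⟩ := hz
        exact ⟨x, ⟨i, hx⟩, hz⟩
      · rintro ⟨x, ⟨i, hx⟩, hz⟩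
        refine ⟨i, ?_⟩
        rw [vars_apply θ (ts i)]
        simp only [Set.mem_iUnion]
        exact ⟨x, hx, hz⟩

lemma apply_comp (a b : Subst F) : ∀ t : Term F,
    (Subst.comp a b).apply t = a.apply (b.apply t)
  | .var y => by simp [Subst.apply, Subst.comp]
  | .app n f ts => by
      simp only [Subst.apply]
      exact congrArg _ (funext fun i => apply_comp a b (ts i))

lemma apply_eq_self (σ : Subst F) : ∀ t : Term F, σ.apply t = t →
    ∀ y ∈ t.vars, σ y = .var y
  | .var x, h => by
      simp only [Term.vars, Set.mem_singleton_iff]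
      rintro y rfl
      simpa [Subst.apply] using h
  | .app n f ts, h => by
      simp only [Subst.apply] at h
      injection h with h1 h2 h3
      have h3' : (fun i => σ.apply (ts i)) = ts := h3
      simp only [Term.vars, Set.mem_iUnion]
      rintro y ⟨i, hy⟩
      exact apply_eq_self σ (ts i) (congrFun h3' i) y hy

lemma isVar_of_apply_var (σ : Subst F) {s : Term F} {y : ℕ}
    (h : σ.apply s = .var y) : ∃ w, s = .var w := by
  cases s with
  | var w => exact ⟨w, rfl⟩
  | app n f ts => simp [Subst.apply] at h

lemma vars_rename {V : Set ℕ} {ρ : ℕ → ℕ} (δ : Subst F)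
    (hρ : ∀ y ∈ V, δ y = .var (ρ y)) : ∀ s : Term F, s.vars ⊆ V →
    (δ.apply s).vars = ρ '' s.vars
  | .var y, hs => by
      have hy : y ∈ V := hs rfl
      simp [Subst.apply, hρ y hy, Term.vars]
  | .app n f ts, hs => by
      simp only [Subst.apply, Term.vars, Set.image_iUnion]
      exact Set.iUnion_congr fun i =>
        vars_rename δ hρ (ts i) (fun z hz => hs (Set.mem_iUnion.2 ⟨i, hz⟩))

lemma count_rename {V : Set ℕ} {ρ : ℕ → ℕ} (δ : Subst F)
    (hρ : ∀ y ∈ V, δ y = .var (ρ y)) (hinj : Set.InjOn ρ V) :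
    ∀ s : Term F, s.vars ⊆ V → ∀ y ∈ V, (δ.apply s).count (ρ y) = s.count y
  | .var w, hs, y, hy => by
      have hw : w ∈ V := hs rfl
      simp only [Subst.apply, hρ w hw, Term.count]
      by_cases h : w = y
      · simp [h]
      · rw [if_neg h, if_neg (fun hc => h (hinj hw hy hc))]
  | .app n f ts, hs, y, hy => by
      simp only [Subst.apply, Term.count]
      exact Finset.sum_congr rfl fun i _ =>
        count_rename δ hρ hinj (ts i) (fun z hz => hs (Set.mem_iUnion.2 ⟨i, hz⟩)) y hy

lemma bddAbove_chi (t : Term F) : BddAbove (Set.range fun x => Term.chiVar x t) := by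
  refine ⟨2, ?_⟩
  rintro a ⟨x, rfl⟩
  exact min_le_left _ _

lemma chiVar_le_mult (x : ℕ) (t : Term F) : Term.chiVar x t ≤ t.mult :=
  le_csSup (bddAbove_chi t) ⟨x, rfl⟩

lemma mult_le_two (t : Term F) : t.mult ≤ 2 :=
  csSup_le ⟨Term.chiVar 0 t, ⟨0, rfl⟩⟩ (by rintro a ⟨x, rfl⟩; exact min_le_left _ _)

lemma count_le_one_of_mult (t : Term F) (h : t.mult ≤ 1) (z : ℕ) : t.count z ≤ 1 := by
  have := (chiVar_le_mult z t).trans h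
  simp only [Term.chiVar] at this
  omega

lemma mult_le_one (t : Term F) (h : ∀ z, t.count z ≤ 1) : t.mult ≤ 1 :=
  csSup_le ⟨Term.chiVar 0 t, ⟨0, rfl⟩⟩ (by
    rintro a ⟨x, rfl⟩
    exact (min_le_right _ _).trans (h x))

lemma mult_rename_le {V : Set ℕ} {ρ : ℕ → ℕ} (δ : Subst F)
    (hρ : ∀ y ∈ V, δ y = .var (ρ y)) (hinj : Set.InjOn ρ V)
    (s : Term F) (hs : s.vars ⊆ V) : (δ.apply s).mult ≤ s.mult := by
  refine csSup_le ⟨Term.chiVar 0 _, ⟨0, rfl⟩⟩ ?_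
  rintro a ⟨z, rfl⟩
  by_cases hz : z ∈ (δ.apply s).vars
  · rw [vars_rename δ hρ s hs] at hz
    obtain ⟨y, hy, rfl⟩ := hz
    have : (δ.apply s).count (ρ y) = s.count y := count_rename δ hρ hinj s hs y (hs hy)
    calc Term.chiVar (ρ y) (δ.apply s) = Term.chiVar y s := by
            simp [Term.chiVar, this]
      _ ≤ s.mult := chiVar_le_mult y s
  · have : (δ.apply s).count z = 0 := by
      have h2 := (count_pos_iff z (δ.apply s)).not.2 hz
      omega
    simp only []
    simp [Term.chiVar, this]

lemma vars_subset_of_idem {θ : Subst F} (hid : θ.Idempotent) (u : ℕ) :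
    (θ u).vars ⊆ (θ.dom)ᶜ := by
  intro z hz
  by_cases hu : u ∈ θ.dom
  · intro hzd
    have : z ∈ θ.dom ∩ θ.rng := ⟨hzd, Set.mem_biUnion hu hz⟩
    rw [hid] at this
    exact this
  · have : θ u = .var u := not_not.1 hu
    rw [this] at hz
    cases hz
    exact hu

lemma occ_eq_empty_of_idem {θ : Subst F} (hid : θ.Idempotent) {z : ℕ}
    (hz : z ∈ θ.dom) : θ.occ z = ∅ := by
  ext u
  simp only [Subst.occ, Set.mem_setOf_eq, Set.mem_empty_iff_false, iff_false]
  intro hu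
  exact vars_subset_of_idem hid u hu hz

lemma imgu_rename {E : Set (Term F × Term F)} {θ ψ : Subst F}
    (hθ : θ ∈ imgu E) (hψ : ψ ∈ imgu E) :
    ∃ (δ : Subst F) (ρ : ℕ → ℕ), (∀ x, ψ x = δ.apply (θ x)) ∧
      (∀ y ∉ θ.dom, δ y = .var (ρ y)) ∧ Set.InjOn ρ (θ.dom)ᶜ := by
  obtain ⟨δ, -, hδ⟩ := hθ.1.2 ψ hψ.1.1
  obtain ⟨δ', -, hδ'⟩ := hψ.1.2 θ hθ.1.1
  have happ : ∀ x, ψ x = δ.apply (θ x) := fun x => congrFun hδ x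
  have happ' : ∀ x, θ x = δ'.apply (ψ x) := fun x => congrFun hδ' x
  have key : ∀ y ∉ θ.dom, δ'.apply (δ y) = Term.var y := by
    intro y hy
    have hfix : (Subst.comp δ' δ).apply (θ y) = θ y := by
      rw [apply_comp, ← happ y, ← happ' y]
    have hθy : θ y = .var y := not_not.1 hy
    have := apply_eq_self _ _ hfix y (by rw [hθy]; exact rfl)
    exact this
  have hvar : ∀ y, ∃ w, y ∉ θ.dom → δ y = .var w := by
    intro y
    by_cases hy : y ∈ θ.dom
    · exact ⟨0, fun hc => absurd hy hc⟩
    · obtain ⟨w, hw⟩ := isVar_of_apply_var δ' (key y hy)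
      exact ⟨w, fun _ => hw⟩
  choose ρ hρ using hvar
  refine ⟨δ, ρ, happ, fun y hy => hρ y hy, ?_⟩
  intro y1 h1 y2 h2 heq
  have e1 : δ' (ρ y1) = Term.var y1 := by
    have := key y1 h1
    rwa [hρ y1 h1] at this
  have e2 : δ' (ρ y2) = Term.var y2 := by
    have := key y2 h2
    rwa [hρ y2 h2] at this
  rw [heq, e2] at e1
  exact (Term.var.inj e1).symm

lemma count_apply_le_one (θ : Subst F) (z : ℕ) :
    ∀ t : Term F,
    (∀ x, z ∈ (θ x).vars → t.count x ≤ 1) →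
    (∀ x ∈ t.vars, (θ x).count z ≤ 1) →
    (∀ x ∈ t.vars, ∀ y ∈ t.vars, z ∈ (θ x).vars → z ∈ (θ y).vars → x = y) →
    (θ.apply t).count z ≤ 1
  | .var x, _, h2, _ => h2 x rfl
  | .app n f ts, h1, h2, h3 => by
      have hsub : ∀ i : Fin n, (ts i).vars ⊆ (Term.app n f ts).vars := by
        intro i x hx
        exact Set.mem_iUnion.2 ⟨i, hx⟩
      have hcnt : ∀ (i : Fin n) (x : ℕ), (ts i).count x ≤ (Term.app n f ts).count x := by
        intro i x
        exact Finset.single_le_sum (f := fun j => (ts j).count x)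
          (fun j _ => Nat.zero_le _) (Finset.mem_univ i)
      have hIH : ∀ i : Fin n, (θ.apply (ts i)).count z ≤ 1 := fun i =>
        count_apply_le_one θ z (ts i)
          (fun x hx => le_trans (hcnt i x) (h1 x hx))
          (fun x hx => h2 x (hsub i hx))
          (fun x hx y hy => h3 x (hsub i hx) y (hsub i hy))
      simp only [Subst.apply, Term.count]
      by_contra hcon
      push_neg at hcon
      set c : Fin n → ℕ := fun i => (θ.apply (ts i)).count z with hc
      have hT : 2 ≤ (Finset.univ.filter fun i => 0 < c i).card := by
        have e1 : ∑ i, c i = ∑ i ∈ Finset.univ.filter (fun i => 0 < c i), c i := by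
          refine (Finset.sum_subset (Finset.filter_subset _ _) ?_).symm
          intro i _ hi
          simp only [Finset.mem_filter, Finset.mem_univ, true_and, not_lt] at hi
          omega
        have e2 : ∑ i ∈ Finset.univ.filter (fun i => 0 < c i), c i ≤
            (Finset.univ.filter fun i => 0 < c i).card := by
          have := Finset.sum_le_card_nsmul (Finset.univ.filter fun i => 0 < c i) c 1
            (fun i _ => hIH i)
          simpa using this
        have hcon' : 2 ≤ ∑ i : Fin n, c i := hcon
        rw [e1] at hcon'
        omega
      obtain ⟨i, hi, j, hj, hij⟩ := Finset.one_lt_card.1 (lt_of_lt_of_le one_lt_two hT)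
      simp only [Finset.mem_filter] at hi hj
      have hzi : z ∈ (θ.apply (ts i)).vars := (count_pos_iff z _).1 hi.2
      have hzj : z ∈ (θ.apply (ts j)).vars := (count_pos_iff z _).1 hj.2
      rw [vars_apply] at hzi hzj
      obtain ⟨xi, hxi, hzi⟩ := Set.mem_iUnion₂.1 hzi
      obtain ⟨xj, hxj, hzj⟩ := Set.mem_iUnion₂.1 hzj
      have hx : xi = xj := h3 xi (hsub i hxi) xj (hsub j hxj) hzi hzj
      subst hx
      have hci : 0 < (ts i).count xi := (count_pos_iff xi _).2 hxi
      have hcj : 0 < (ts j).count xi := (count_pos_iff xi _).2 hxj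
      have h2sum : 2 ≤ ∑ k, (ts k).count xi := by
        have : (ts i).count xi + (ts j).count xi ≤ ∑ k, (ts k).count xi := by
          rw [← Finset.sum_pair (f := fun k => Term.count xi (ts k)) hij]
          exact Finset.sum_le_sum_of_subset (by
            intro k _
            exact Finset.mem_univ k)
        omega
      have := h1 xi hzi
      simp only [Term.count] at this
      omega

end Aux

/-- if `E ∈ γ_Sh(S) ∩ γ_Lin(L)` and `θ ∈ imgu(E)` then
`χ(θ(t)) ≤ χ(t, S, L)`. -/
theorem stmt6 {F : ℕ → Type} (X : Set ℕ) (hX : X.Finite)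
    (S : Set (Set ℕ)) (hS : ∅ ∈ S) (hSX : ∀ G ∈ S, G ⊆ X)
    (L : Set ℕ) (hL : L ⊆ X)
    (t : Term F) (ht : t.vars ⊆ X)
    (E : Set (Term F × Term F))
    (hE : E ∈ (gammaSh X S ∩ gammaLin L : Set (Set (Term F × Term F))))
    (θ : Subst F) (hθ : θ ∈ imgu E) :
    (θ.apply t).mult ≤ chiA t S L := by
  by_cases hP : (∃ x ∈ varS S, Term.chiVar x t = 2) ∨
     (∃ x ∈ varS S, x ∈ t.vars \ L) ∨
     (∃ G ∈ S, ∃ x ∈ t.vars, ∃ y ∈ t.vars, x ≠ y ∧ x ∈ G ∧ y ∈ G)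
  · rw [chiA, if_pos hP]
    exact mult_le_two _
  · rw [chiA, if_neg hP]
    push_neg at hP
    obtain ⟨hP1, hP2, hP3⟩ := hP
    obtain ⟨⟨-, θ₁, hθ₁, hSh₁⟩, -, θ₂, hθ₂, hLin₂⟩ := hE
    -- sharing transfer to θ
    have hSh : ∀ z : ℕ, Subst.occ θ z ∩ X ∈ S := by
      obtain ⟨δ, ρ, happ, hρ, hinj⟩ := imgu_rename hθ hθ₁
      intro z
      by_cases hz : z ∈ θ.dom
      · rw [occ_eq_empty_of_idem hθ.2 hz]
        simpa using hS
      · have hocc : Subst.occ θ z = Subst.occ θ₁ (ρ z) := by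
          ext u
          simp only [Subst.occ, Set.mem_setOf_eq]
          rw [happ u, vars_rename δ (fun y hy => hρ y hy) (θ u) (vars_subset_of_idem hθ.2 u)]
          constructor
          · exact fun h => ⟨z, h, rfl⟩
          · rintro ⟨w, hw, hww⟩
            rwa [← hinj (vars_subset_of_idem hθ.2 u hw) hz hww]
        rw [hocc]
        exact hSh₁ ⟨ρ z, rfl⟩
    -- linearity transfer to θ
    have hLin : ∀ x ∈ L, (θ x).mult ≤ 1 := by
      obtain ⟨δ, ρ, happ, hρ, hinj⟩ := imgu_rename hθ₂ hθ
      intro x hx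
      rw [happ x]
      exact le_trans
        (mult_rename_le δ (fun y hy => hρ y hy) hinj (θ₂ x) (vars_subset_of_idem hθ₂.2 x))
        (hLin₂ x hx)
    -- variables of t are in varS S when they share
    have hvarS : ∀ x ∈ t.vars, ∀ z, z ∈ (θ x).vars → x ∈ varS S := by
      intro x hx z hz
      exact Set.mem_biUnion (hSh z) ⟨hz, ht hx⟩
    refine mult_le_one _ (fun z => ?_)
    refine count_apply_le_one θ z t ?_ ?_ ?_
    · intro x hz
      by_contra hc
      push_neg at hc
      have hxt : x ∈ t.vars := (count_pos_iff x t).1 (by omega)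
      have := hP1 x (hvarS x hxt z hz)
      simp only [Term.chiVar] at this
      omega
    · intro x hx
      by_contra hc
      push_neg at hc
      have hz : z ∈ (θ x).vars := (count_pos_iff z (θ x)).1 (by omega)
      have hxS : x ∈ varS S := hvarS x hx z hz
      have hxL : x ∉ L := by
        intro hxL
        have := count_le_one_of_mult (θ x) (hLin x hxL) z
        omega
      exact hP2 x hxS ⟨hx, hxL⟩
    · intro x hx y hy hzx hzy
      by_contra hxy
      exact hP3 (Subst.occ θ z ∩ X) (hSh z) x hx y hy hxy ⟨hzx, ht hx⟩ ⟨hzy, ht hy⟩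

end SharingPaper
end

section
/- Let X be a set, F ⊆ X, S a set of subsets of X, B ∈ K_F(S), and R1, R2 ⊆ B. Then R1* ⊎ R2* = R1* ⊎_F R2*. -/
namespace SharingPaper

lemma subset_closure {α : Type*} (S : Set (Set α)) : S ⊆ closure S := by
  intro x hx S' hS'
  exact hS'.1 hx

lemma closure_union_mem {α : Type*} (S : Set (Set α)) {G1 G2 : Set α}
    (h1 : G1 ∈ closure S) (h2 : G2 ∈ closure S) : G1 ∪ G2 ∈ closure S := by
  intro S' hS'
  exact hS'.2 G1 (h1 S' hS') G2 (h2 S' hS')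

lemma sUnion_mem_closure {α : Type*} (S : Set (Set α)) {C : Set (Set α)}
    (hfin : C.Finite) (hsub : C ⊆ S) (hne : C.Nonempty) : ⋃₀ C ∈ closure S := by
  revert hsub hne
  refine Set.Finite.induction_on (motive := fun C _ => C ⊆ S → C.Nonempty → ⋃₀ C ∈ closure S)
    C hfin (fun _ hne => absurd hne (by simp)) ?_
  intro a C' _ hC' ih hsub _
  rcases Set.eq_empty_or_nonempty C' with h | h
  · subst h
    simpa using subset_closure S (hsub (by simp))
  · have hC'sub : C' ⊆ S := fun x hx => hsub (Set.mem_insert_of_mem _ hx)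
    have ha : a ∈ closure S := subset_closure S (hsub (Set.mem_insert _ _))
    have := closure_union_mem S ha (ih hC'sub h)
    simpa [Set.sUnion_insert] using this

lemma mem_closure_iff {α : Type*} (S : Set (Set α)) (G : Set α) :
    G ∈ closure S ↔ ∃ C : Set (Set α), C.Finite ∧ C ⊆ S ∧ C.Nonempty ∧ G = ⋃₀ C := by
  constructor
  · intro hG
    have : {G | ∃ C : Set (Set α), C.Finite ∧ C ⊆ S ∧ C.Nonempty ∧ G = ⋃₀ C} ∈
        {S' | S ⊆ S' ∧ ∀ G1 ∈ S', ∀ G2 ∈ S', G1 ∪ G2 ∈ S'} := by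
      constructor
      · intro x hx
        exact ⟨{x}, Set.finite_singleton x, by simpa using hx, ⟨x, rfl⟩, by simp⟩
      · rintro G1 ⟨C1, hf1, hs1, hn1, rfl⟩ G2 ⟨C2, hf2, hs2, hn2, rfl⟩
        exact ⟨C1 ∪ C2, hf1.union hf2, Set.union_subset hs1 hs2,
          hn1.mono Set.subset_union_left, by simp [Set.sUnion_union]⟩
    exact hG _ this
  · rintro ⟨C, hf, hs, hn, rfl⟩
    exact sUnion_mem_closure S hf hs hn

lemma disj_sUnion {α : Type*} {Fv : Set α} {S B : Set (Set α)} (hB : B ∈ KF Fv S)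
    {C D : Set (Set α)} (hC : C ⊆ B) (hD : D ⊆ B)
    (hne : ∀ A1 ∈ C, ∀ A2 ∈ D, A1 ≠ A2) :
    ⋃₀ C ∩ ⋃₀ D ∩ Fv = ∅ := by
  ext x
  simp only [Set.mem_inter_iff, Set.mem_sUnion, Set.mem_empty_iff_false, iff_false]
  rintro ⟨⟨⟨A1, hA1, hx1⟩, A2, hA2, hx2⟩, hxF⟩
  have := hB.2.2 A1 (hC hA1) A2 (hD hA2) (hne A1 hA1 A2 hA2)
  exact absurd this (Set.nonempty_iff_ne_empty.mp ⟨x, ⟨hx1, hx2⟩, hxF⟩)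

/-- if `B ∈ K_F(S)` and `R1, R2 ⊆ B` then `R1* ⊎ R2* = R1* ⊎_F R2*`. -/
theorem stmt14 {α : Type*} (Fv : Set α) (S : Set (Set α))
    (B : Set (Set α)) (hB : B ∈ KF Fv S)
    (R1 R2 : Set (Set α)) (hR1 : R1 ⊆ B) (hR2 : R2 ⊆ B) :
    pairUnion (closure R1) (closure R2) = pairUnionF Fv (closure R1) (closure R2) := by
  apply Set.Subset.antisymm
  · rintro G ⟨G1, hG1, G2, hG2, rfl⟩
    obtain ⟨C1, hf1, hs1, hn1, rfl⟩ := (mem_closure_iff R1 G1).mp hG1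
    obtain ⟨C2, hf2, hs2, hn2, rfl⟩ := (mem_closure_iff R2 G2).mp hG2
    have hC1B : C1 ⊆ B := hs1.trans hR1
    have hC2B : C2 ⊆ B := hs2.trans hR2
    rcases Set.eq_empty_or_nonempty (C2 \ C1) with h21 | h21
    · have hsub21 : C2 ⊆ C1 := by
        intro x hx
        by_contra hnx
        exact absurd (Set.mem_diff_of_mem hx hnx) (h21 ▸ Set.notMem_empty x)
      rcases Set.eq_empty_or_nonempty (C1 \ C2) with h12 | h12
      · have hsub12 : C1 ⊆ C2 := by
          intro x hx
          by_contra hnx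
          exact absurd (Set.mem_diff_of_mem hx hnx) (h12 ▸ Set.notMem_empty x)
        have : C1 = C2 := Set.Subset.antisymm hsub12 hsub21
        subst this
        exact ⟨⋃₀ C1, hG1, ⋃₀ C1, hG2, fun h => absurd rfl h, by simp⟩
      · refine ⟨⋃₀ (C1 \ C2), (mem_closure_iff R1 _).mpr
          ⟨C1 \ C2, hf1.subset Set.diff_subset, (Set.diff_subset.trans hs1), h12, rfl⟩,
          ⋃₀ C2, hG2, fun _ => ?_, ?_⟩
        · exact disj_sUnion hB (Set.diff_subset.trans hC1B) hC2B
            (fun A1 hA1 A2 hA2 h => hA1.2 (h ▸ hA2))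
        · rw [← Set.sUnion_union, ← Set.sUnion_union, Set.diff_union_self]
    · refine ⟨⋃₀ C1, hG1, ⋃₀ (C2 \ C1), (mem_closure_iff R2 _).mpr
        ⟨C2 \ C1, hf2.subset Set.diff_subset, (Set.diff_subset.trans hs2), h21, rfl⟩,
        fun _ => ?_, ?_⟩
      · exact disj_sUnion hB hC1B (Set.diff_subset.trans hC2B)
          (fun A1 hA1 A2 hA2 h => hA2.2 (h ▸ hA1))
      · rw [← Set.sUnion_union, ← Set.sUnion_union, Set.union_diff_self]
  · rintro G ⟨G1, hG1, G2, hG2, _, rfl⟩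
    exact ⟨G1, hG1, G2, hG2, rfl⟩


end SharingPaper
end
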